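/- Let X be a locally compact Hausdorff space and let Γ be a topological abelian group (written additively) that is separating for X. Let k, l ∈ ℕ and let a_0, …, a_k, b_0, …, b_l ∈ X be (not necessarily distinct) points such that Σ_{i=0}^{k} f(a_i) = Σ_{j=0}^{l} f(b_j) for every continuous function f : X → Γ. Then k = l, and for every x ∈ X the number of indices i with a_i = x equals the number of indices j with b_j = x; in particular {a_0, …, a_k} = {b_0, …, b_k} as sets. -/

import Mathlib

open Set Function

/-- A topological abelian group `Γ` is separating for a space `X` if for every finite
`F ⊆ X` and `x ∉ F` there is a continuous `f : X → Γ` with `f x` of infinite order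
and `f` vanishing on `F`. -/
def IsSeparating (Γ : Type*) [TopologicalSpace Γ] [AddCommGroup Γ]
    (X : Type*) [TopologicalSpace X] : Prop :=
  ∀ F : Set X, F.Finite → ∀ x ∉ F, ∃ f : X → Γ,
    Continuous f ∧ (∀ n : ℕ, 1 ≤ n → n • f x ≠ 0) ∧ ∀ y ∈ F, f y = 0

theorem stmt9 {X : Type*} [TopologicalSpace X] [T2Space X] [LocallyCompactSpace X]
    {Γ : Type*} [TopologicalSpace Γ] [AddCommGroup Γ] [IsTopologicalAddGroup Γ]
    (hsep : IsSeparating Γ X)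
    (k l : ℕ) (a : Fin (k + 1) → X) (b : Fin (l + 1) → X)
    (hab : ∀ f : X → Γ, Continuous f → ∑ i, f (a i) = ∑ j, f (b j)) :
    k = l ∧ (∀ x : X, {i : Fin (k + 1) | a i = x}.ncard = {j : Fin (l + 1) | b j = x}.ncard) ∧
      Set.range a = Set.range b := by
  classical
  have key : ∀ x : X, (Finset.univ.filter (fun i => a i = x)).card
      = (Finset.univ.filter (fun j => b j = x)).card := by
    intro x
    by_cases hx : x ∈ Set.range a ∪ Set.range b
    · obtain ⟨f, hf, hord, hvan⟩ := hsep ((Set.range a ∪ Set.range b) \ {x})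
        (((Set.finite_range a).union (Set.finite_range b)).diff)
        x (by simp)
      set m := (Finset.univ.filter (fun i => a i = x)).card with hm
      set n := (Finset.univ.filter (fun j => b j = x)).card with hn
      have ha : ∑ i, f (a i) = m • f x := by
        have : ∑ i, f (a i) = ∑ i, if a i = x then f x else 0 := by
          apply Finset.sum_congr rfl
          intro i _
          by_cases h : a i = x
          · simp [h]
          · simp [h, hvan (a i) ⟨Or.inl ⟨i, rfl⟩, h⟩]
        rw [this, Finset.sum_ite, Finset.sum_const, Finset.sum_const, smul_zero, add_zero]
      have hb : ∑ j, f (b j) = n • f x := by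
        have : ∑ j, f (b j) = ∑ j, if b j = x then f x else 0 := by
          apply Finset.sum_congr rfl
          intro j _
          by_cases h : b j = x
          · simp [h]
          · simp [h, hvan (b j) ⟨Or.inr ⟨j, rfl⟩, h⟩]
        rw [this, Finset.sum_ite, Finset.sum_const, Finset.sum_const, smul_zero, add_zero]
      have heq : m • f x = n • f x := by rw [← ha, ← hb]; exact hab f hf
      by_contra hne
      have hz : ((m : ℤ) - n) • f x = 0 := by
        rw [sub_zsmul, natCast_zsmul, natCast_zsmul, heq]
        abel
      set d := ((m : ℤ) - n).natAbs with hd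
      have hd0 : d ≠ 0 := by
        simp only [hd, Int.natAbs_ne_zero, sub_ne_zero]
        exact_mod_cast hne
      have hdz : (d : ℕ) • f x = 0 := by
        rcases Int.natAbs_eq ((m : ℤ) - n) with h | h
        · rw [← natCast_zsmul, ← h]; exact hz
        · have : (-(d : ℤ)) • f x = 0 := by rw [← h]; exact hz
          rw [neg_zsmul, neg_eq_zero, natCast_zsmul] at this
          exact this
      exact hord d (Nat.one_le_iff_ne_zero.mpr hd0) hdz
    · simp only [Set.mem_union, Set.mem_range, not_or, not_exists] at hx
      rw [Finset.filter_false_of_mem (fun i _ => hx.1 i),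
        Finset.filter_false_of_mem (fun j _ => hx.2 j)]
      simp
  have hkl : k = l := by
    have h1 : (Finset.univ : Finset (Fin (k + 1))).card
        = ∑ x ∈ (Finset.univ.image a ∪ Finset.univ.image b),
            (Finset.univ.filter (fun i => a i = x)).card :=
      Finset.card_eq_sum_card_fiberwise (by
        intro i _
        simp only [Finset.mem_coe, Finset.coe_union, Set.mem_union, Finset.mem_union, Finset.mem_image]
        exact Or.inl ⟨i, Finset.mem_univ i, rfl⟩)
    have h2 : (Finset.univ : Finset (Fin (l + 1))).card
        = ∑ x ∈ (Finset.univ.image a ∪ Finset.univ.image b),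
            (Finset.univ.filter (fun j => b j = x)).card :=
      Finset.card_eq_sum_card_fiberwise (by
        intro j _
        simp only [Finset.mem_coe, Finset.coe_union, Set.mem_union, Finset.mem_union, Finset.mem_image]
        exact Or.inr ⟨j, Finset.mem_univ j, rfl⟩)
    have : (Finset.univ : Finset (Fin (k + 1))).card
        = (Finset.univ : Finset (Fin (l + 1))).card := by
      rw [h1, h2]
      exact Finset.sum_congr rfl fun x _ => key x
    simpa using this
  have hcard : ∀ x : X, {i : Fin (k + 1) | a i = x}.ncard
      = {j : Fin (l + 1) | b j = x}.ncard := by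
    intro x
    have e1 : {i : Fin (k + 1) | a i = x} = ↑(Finset.univ.filter (fun i => a i = x)) := by
      ext i; simp
    have e2 : {j : Fin (l + 1) | b j = x} = ↑(Finset.univ.filter (fun j => b j = x)) := by
      ext j; simp
    rw [e1, e2, Set.ncard_coe_finset, Set.ncard_coe_finset, key x]
  refine ⟨hkl, hcard, ?_⟩
  ext x
  simp only [Set.mem_range]
  constructor
  · rintro ⟨i, rfl⟩
    have : (Finset.univ.filter (fun j => b j = a i)).card ≠ 0 := by
      rw [← key (a i)]
      exact Finset.card_ne_zero_of_mem (Finset.mem_filter.mpr ⟨Finset.mem_univ i, rfl⟩)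
    obtain ⟨j, hj⟩ := Finset.card_ne_zero.mp this
    exact ⟨j, (Finset.mem_filter.mp hj).2⟩
  · rintro ⟨j, rfl⟩
    have : (Finset.univ.filter (fun i => a i = b j)).card ≠ 0 := by
      rw [key (b j)]
      exact Finset.card_ne_zero_of_mem (Finset.mem_filter.mpr ⟨Finset.mem_univ j, rfl⟩)
    obtain ⟨i, hi⟩ := Finset.card_ne_zero.mp this
    exact ⟨i, (Finset.mem_filter.mp hi).2⟩
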